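/- arXiv:2602.11420 — 4 statements merged into one kernel-verified Lean document; each statement's English description precedes it below -/
import Mathlib

section
/- Let H be a real Hilbert space, ν > 0 and Λ > 0. Let u : [0,∞) → H be twice continuously differentiable and w : [0,∞) → H be continuous, and suppose that u''(t) + ν u'(t) + w(t) = 0 for all t ≥ 0. Assume the function q(t) := ⟨u(t), w(t)⟩ is differentiable with q'(t) = 2⟨u'(t), w(t)⟩ for all t ≥ 0, and that q(t) ≥ Λ‖u(t)‖² for all t ≥ 0. Then there exist constants C > 0 and K ≥ 1, depending only on ν and Λ, such that ‖u'(t)‖² + q(t) ≤ K e^{-Ct} (‖u'(0)‖² + q(0)) for all t ≥ 0. -/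
open MeasureTheory Set
open scoped RealInnerProductSpace

private lemma aux_key (ν Λ ε C a b P Q : ℝ) (hΛ : 0 < Λ) (hε0 : 0 < ε)
    (hεν : ε * (2 * Λ + ν ^ 2) ≤ 2 * Λ * ν) (hC0 : 0 < C) (hCν : 2 * C ≤ ν)
    (hCε : 2 * C ≤ ε) (ha0 : 0 ≤ a) (hb0 : 0 ≤ b)
    (hP1 : P ≤ b * a) (hP2 : -(b * a) ≤ P) (hQ : Λ * b ^ 2 ≤ Q) :
    (-(2 * ν) * a ^ 2 + ε * (a ^ 2 - ν * P - Q)) + C * (a ^ 2 + Q + ε * P) ≤ 0 := by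
  have hQ0 : 0 ≤ Q := le_trans (by positivity) hQ
  have hνC : 0 ≤ ν - C := by linarith
  have h5 : 0 ≤ 2 * Λ * ε * (ν - C) * (P + b * a) :=
    mul_nonneg (by positivity) (by linarith)
  have h6 : 0 ≤ ε * (Λ * b - ν * a) ^ 2 := by positivity
  have h7 : 0 ≤ 2 * Λ * ε * C * (a * b) := by positivity
  have h8 : 0 ≤ ε * Λ * (Q - Λ * b ^ 2) := mul_nonneg (by positivity) (by linarith)
  have h9 : 0 ≤ a ^ 2 * (2 * Λ * ν - ε * (2 * Λ + ν ^ 2)) :=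
    mul_nonneg (sq_nonneg a) (by linarith)
  have h10 : 0 ≤ Λ * (ε - 2 * C) * Q := mul_nonneg (mul_nonneg hΛ.le (by linarith)) hQ0
  have h11 : 0 ≤ 2 * Λ * (ν - C) * a ^ 2 := mul_nonneg (by positivity) (sq_nonneg a)
  have hT : 2 * Λ * ((-(2 * ν) * a ^ 2 + ε * (a ^ 2 - ν * P - Q)) +
      C * (a ^ 2 + Q + ε * P)) ≤ 0 := by nlinarith [h5, h6, h7, h8, h9, h10, h11]
  by_contra hcon
  push_neg at hcon
  have := mul_pos (show (0:ℝ) < 2 * Λ by linarith) hcon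
  linarith

private lemma aux_low (Λ ε a b P Q : ℝ) (hΛ : 0 < Λ) (hε0 : 0 < ε) (hε1 : ε ≤ 1)
    (hεΛ : ε ≤ Λ) (ha0 : 0 ≤ a) (hb0 : 0 ≤ b) (hP2 : -(b * a) ≤ P)
    (hQ : Λ * b ^ 2 ≤ Q) :
    a ^ 2 + Q ≤ 2 * (a ^ 2 + Q + ε * P) := by
  have h12 : 0 ≤ 2 * ε * (P + b * a) := mul_nonneg (by positivity) (by linarith)
  have h13 : 0 ≤ ε * (a - b) ^ 2 := by positivity
  have h14 : 0 ≤ (Λ - ε) * b ^ 2 := mul_nonneg (by linarith) (sq_nonneg b)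
  have h15 : 0 ≤ (1 - ε) * a ^ 2 := mul_nonneg (by linarith) (sq_nonneg a)
  nlinarith [h12, h13, h14, h15]

private lemma aux_up (Λ ε a b P Q : ℝ) (hΛ : 0 < Λ) (hε0 : 0 < ε) (hε1 : ε ≤ 1)
    (hεΛ : ε ≤ Λ) (ha0 : 0 ≤ a) (hb0 : 0 ≤ b) (hP1 : P ≤ b * a)
    (hQ : Λ * b ^ 2 ≤ Q) :
    a ^ 2 + Q + ε * P ≤ 2 * (a ^ 2 + Q) := by
  have h12 : 0 ≤ 2 * ε * (b * a - P) := mul_nonneg (by positivity) (by linarith)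
  have h13 : 0 ≤ ε * (a - b) ^ 2 := by positivity
  have h14 : 0 ≤ (Λ - ε) * b ^ 2 := mul_nonneg (by linarith) (sq_nonneg b)
  have h15 : 0 ≤ (1 - ε) * a ^ 2 := mul_nonneg (by linarith) (sq_nonneg a)
  have hQ0 : 0 ≤ Q := le_trans (by positivity) hQ
  nlinarith [h12, h13, h14, h15, sq_nonneg a]

/-- Hypocoercive decay for the damped wave equation.  In a real Hilbert
space `H`, for `ν > 0`, `Λ > 0`, there are constants `C > 0`, `K ≥ 1` (depending only
on `ν` and `Λ`) such that: for every `u : [0,∞) → H` twice continuously differentiable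
(encoded by its derivatives `u'`, `u''` within `[0,∞)`) and continuous `w : [0,∞) → H`
with `u'' + ν u' + w = 0` on `[0,∞)`, if `q t := ⟪u t, w t⟫` is differentiable with
`q' = 2⟪u', w⟫` and `q t ≥ Λ ‖u t‖²` on `[0,∞)`, then
`‖u' t‖² + q t ≤ K e^{-C t} (‖u' 0‖² + q 0)` for all `t ≥ 0`. -/
theorem stmt_4 {H : Type*} [NormedAddCommGroup H] [InnerProductSpace ℝ H]
    (ν Λ : ℝ) (hν : 0 < ν) (hΛ : 0 < Λ) :
    ∃ C > 0, ∃ K ≥ (1 : ℝ), ∀ u u' u'' w : ℝ → H,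
      (∀ t ∈ Ici (0 : ℝ), HasDerivWithinAt u (u' t) (Ici 0) t) →
      (∀ t ∈ Ici (0 : ℝ), HasDerivWithinAt u' (u'' t) (Ici 0) t) →
      ContinuousOn u'' (Ici 0) → ContinuousOn w (Ici 0) →
      (∀ t ≥ (0 : ℝ), u'' t + ν • u' t + w t = 0) →
      (∀ t ∈ Ici (0 : ℝ),
        HasDerivWithinAt (fun r => ⟪u r, w r⟫) (2 * ⟪u' t, w t⟫) (Ici 0) t) →
      (∀ t ≥ (0 : ℝ), Λ * ‖u t‖ ^ 2 ≤ ⟪u t, w t⟫) →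
      ∀ t ≥ (0 : ℝ), ‖u' t‖ ^ 2 + ⟪u t, w t⟫ ≤
        K * Real.exp (-C * t) * (‖u' 0‖ ^ 2 + ⟪u 0, w 0⟫) := by
  have hden : (0:ℝ) < 2 * Λ + ν ^ 2 := by positivity
  set ε : ℝ := min 1 (min Λ (2 * Λ * ν / (2 * Λ + ν ^ 2))) with hεdef
  have hε0 : 0 < ε := lt_min one_pos (lt_min hΛ (by positivity))
  have hε1 : ε ≤ 1 := min_le_left _ _
  have hεΛ : ε ≤ Λ := le_trans (min_le_right _ _) (min_le_left _ _)
  have hεν : ε * (2 * Λ + ν ^ 2) ≤ 2 * Λ * ν := by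
    have h : ε ≤ 2 * Λ * ν / (2 * Λ + ν ^ 2) :=
      le_trans (min_le_right _ _) (min_le_right _ _)
    calc ε * (2 * Λ + ν ^ 2) ≤ (2 * Λ * ν / (2 * Λ + ν ^ 2)) * (2 * Λ + ν ^ 2) :=
          mul_le_mul_of_nonneg_right h hden.le
      _ = 2 * Λ * ν := div_mul_cancel₀ _ hden.ne'
  set C : ℝ := min ν ε / 2 with hCdef
  have hminpos : 0 < min ν ε := lt_min hν hε0
  have hC0 : 0 < C := by positivity
  have hCν : 2 * C ≤ ν := by
    have := min_le_left ν ε; simp only [hCdef]; linarith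
  have hCε : 2 * C ≤ ε := by
    have := min_le_right ν ε; simp only [hCdef]; linarith
  clear_value ε C
  refine ⟨C, hC0, 4, by norm_num, ?_⟩
  intro u u' u'' w hu hu' hu''c hwc heq hqd hcoer
  set F : ℝ → ℝ := fun t => ⟪u' t, u' t⟫ + ⟪u t, w t⟫ + ε * ⟪u t, u' t⟫ with hFdef
  set D : ℝ → ℝ := fun t =>
    -(2 * ν) * ‖u' t‖ ^ 2 + ε * (‖u' t‖ ^ 2 - ν * ⟪u t, u' t⟫ - ⟪u t, w t⟫) with hDdef
  have hinner : ∀ t ∈ Ici (0:ℝ),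
      ⟪u' t, u'' t⟫ = -(ν * ⟪u' t, u' t⟫) - ⟪u' t, w t⟫ ∧
      ⟪u'' t, u' t⟫ = -(ν * ⟪u' t, u' t⟫) - ⟪u' t, w t⟫ ∧
      ⟪u t, u'' t⟫ = -(ν * ⟪u t, u' t⟫) - ⟪u t, w t⟫ := by
    intro t ht
    have h := heq t ht
    rw [add_assoc, add_eq_zero_iff_eq_neg] at h
    have heqt : u'' t = -(ν • u' t) - w t := by rw [h, neg_add, sub_eq_add_neg]
    refine ⟨?_, ?_, ?_⟩
    · rw [heqt, inner_sub_right, inner_neg_right, real_inner_smul_right]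
    · rw [heqt, inner_sub_left, inner_neg_left, real_inner_smul_left,
        real_inner_comm (w t) (u' t)]
    · rw [heqt, inner_sub_right, inner_neg_right, real_inner_smul_right]
  have hF : ∀ t ∈ Ici (0:ℝ), HasDerivWithinAt F (D t) (Ici 0) t := by
    intro t ht
    have h := (((hu' t ht).inner ℝ (hu' t ht)).add (hqd t ht)).add
      (((hu t ht).inner ℝ (hu' t ht)).const_mul ε)
    obtain ⟨h1, h2, h3⟩ := hinner t ht
    have ha : ⟪u' t, u' t⟫ = ‖u' t‖ ^ 2 := real_inner_self_eq_norm_sq _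
    refine HasDerivWithinAt.congr_deriv h ?_
    simp only [hDdef]
    rw [h1, h2, h3, ha]
    ring
  have hkey : ∀ t ∈ Ici (0:ℝ), D t + C * F t ≤ 0 := by
    intro t ht
    have ha : ⟪u' t, u' t⟫ = ‖u' t‖ ^ 2 := real_inner_self_eq_norm_sq _
    have hPab : |⟪u t, u' t⟫| ≤ ‖u t‖ * ‖u' t‖ := abs_real_inner_le_norm _ _
    have h := aux_key ν Λ ε C ‖u' t‖ ‖u t‖ ⟪u t, u' t⟫ ⟪u t, w t⟫ hΛ hε0 hεν hC0
      hCν hCε (norm_nonneg _) (norm_nonneg _) (le_trans (le_abs_self _) hPab)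
      (neg_le_of_abs_le hPab) (hcoer t ht)
    simp only [hDdef, hFdef]
    rw [ha]
    linarith
  set G : ℝ → ℝ := fun t => F t * Real.exp (C * t) with hGdef
  have hFcont : ContinuousOn F (Ici 0) := fun t ht => (hF t ht).continuousWithinAt
  have hGcont : ContinuousOn G (Ici 0) := by
    exact hFcont.mul (Real.continuous_exp.comp (continuous_const.mul continuous_id)).continuousOn
  have hGderiv : ∀ t ∈ Ioi (0:ℝ),
      HasDerivAt G ((D t + C * F t) * Real.exp (C * t)) t := by
    intro t ht
    have hFt : HasDerivAt F (D t) t :=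
      (hF t (mem_Ici.2 (le_of_lt ht))).hasDerivAt (Ici_mem_nhds ht)
    have hexp : HasDerivAt (fun r : ℝ => Real.exp (C * r)) (Real.exp (C * t) * C) t := by
      have h0 : HasDerivAt (fun r : ℝ => C * r) (C * 1) t := (hasDerivAt_id t).const_mul C
      simpa using h0.exp
    have := hFt.mul hexp
    refine HasDerivAt.congr_deriv this ?_
    ring
  have hGanti : AntitoneOn G (Ici 0) := by
    refine antitoneOn_of_deriv_nonpos (convex_Ici 0) hGcont ?_ ?_
    · intro t ht
      rw [interior_Ici] at ht
      exact (hGderiv t ht).differentiableAt.differentiableWithinAt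
    · intro t ht
      rw [interior_Ici] at ht
      rw [(hGderiv t ht).deriv]
      exact mul_nonpos_of_nonpos_of_nonneg (hkey t (mem_Ici.2 (le_of_lt ht))) (Real.exp_pos _).le
  intro t ht
  have hGle : G t ≤ G 0 := hGanti (le_refl (0:ℝ)) ht ht
  have hG0 : G 0 = F 0 := by simp [hGdef]
  have hFt : F t ≤ F 0 * Real.exp (-C * t) := by
    rw [neg_mul, Real.exp_neg, ← div_eq_mul_inv, le_div_iff₀ (Real.exp_pos _)]
    calc F t * Real.exp (C * t) = G t := rfl
      _ ≤ G 0 := hGle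
      _ = F 0 := hG0
  have hlow : ‖u' t‖ ^ 2 + ⟪u t, w t⟫ ≤ 2 * F t := by
    have ha : ⟪u' t, u' t⟫ = ‖u' t‖ ^ 2 := real_inner_self_eq_norm_sq _
    have hPab : |⟪u t, u' t⟫| ≤ ‖u t‖ * ‖u' t‖ := abs_real_inner_le_norm _ _
    have h := aux_low Λ ε ‖u' t‖ ‖u t‖ ⟪u t, u' t⟫ ⟪u t, w t⟫ hΛ hε0 hε1 hεΛ
      (norm_nonneg _) (norm_nonneg _) (neg_le_of_abs_le hPab) (hcoer t ht)
    simp only [hFdef]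
    rw [ha]
    linarith
  have hup : F 0 ≤ 2 * (‖u' 0‖ ^ 2 + ⟪u 0, w 0⟫) := by
    have ha : ⟪u' 0, u' 0⟫ = ‖u' 0‖ ^ 2 := real_inner_self_eq_norm_sq _
    have hPab : |⟪u 0, u' 0⟫| ≤ ‖u 0‖ * ‖u' 0‖ := abs_real_inner_le_norm _ _
    have h := aux_up Λ ε ‖u' 0‖ ‖u 0‖ ⟪u 0, u' 0⟫ ⟪u 0, w 0⟫ hΛ hε0 hε1 hεΛ
      (norm_nonneg _) (norm_nonneg _) (le_trans (le_abs_self _) hPab)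
      (hcoer 0 (le_refl _))
    simp only [hFdef]
    rw [ha]
    linarith
  have h2 : F 0 * Real.exp (-C * t) ≤
      2 * (‖u' 0‖ ^ 2 + ⟪u 0, w 0⟫) * Real.exp (-C * t) :=
    mul_le_mul_of_nonneg_right hup (Real.exp_pos _).le
  calc ‖u' t‖ ^ 2 + ⟪u t, w t⟫ ≤ 2 * F t := hlow
    _ ≤ 2 * (F 0 * Real.exp (-C * t)) := by linarith
    _ ≤ 2 * (2 * (‖u' 0‖ ^ 2 + ⟪u 0, w 0⟫) * Real.exp (-C * t)) := by linarith
    _ = 4 * Real.exp (-C * t) * (‖u' 0‖ ^ 2 + ⟪u 0, w 0⟫) := by ring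
end

section
/- Let H be a real inner product space and b : H × H → ℝ a symmetric, positive semidefinite bilinear form. Let λ > 0, ν > 0 and let u, v, w, f, g ∈ H satisfy: v = λu - f, (λ + ν)v + w = g, and ⟨x, w⟩ = b(x, u) for all x ∈ H. Then λ² (‖v‖² + b(u, u)) ≤ ‖g‖² + b(f, f). -/
open scoped RealInnerProductSpace

/-- Resolvent bound for the damped wave block operator.  In a real inner
product space `H`, let `b` be a symmetric positive semidefinite bilinear form, `λ > 0`,
`ν > 0`, and let `u, v, w, f, g ∈ H` satisfy `v = λu - f`, `(λ+ν)v + w = g`, and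
`⟪x, w⟫ = b x u` for all `x`.  Then `λ²(‖v‖² + b u u) ≤ ‖g‖² + b f f`. -/
theorem stmt_5 {H : Type*} [NormedAddCommGroup H] [InnerProductSpace ℝ H]
    (b : H →ₗ[ℝ] H →ₗ[ℝ] ℝ) (hsymm : ∀ x y : H, b x y = b y x)
    (hpsd : ∀ x : H, 0 ≤ b x x)
    (lam ν : ℝ) (hlam : 0 < lam) (hν : 0 < ν)
    (u v w f g : H)
    (hv : v = lam • u - f)
    (hresolv : (lam + ν) • v + w = g)
    (hw : ∀ x : H, ⟪x, w⟫ = b x u) :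
    lam ^ 2 * (‖v‖ ^ 2 + b u u) ≤ ‖g‖ ^ 2 + b f f := by
  have h1 : ⟪v, g⟫ = (lam + ν) * ‖v‖ ^ 2 + b v u := by
    rw [← hresolv, inner_add_right, real_inner_smul_right, hw v,
      real_inner_self_eq_norm_sq]
  have h2 : b v u = lam * b u u - b f u := by
    rw [hv]; simp [hsymm u]
  -- Cauchy–Schwarz for the psd bilinear form
  have hcs2 : (b f u) ^ 2 ≤ b f f * b u u := by
    have key : ∀ t : ℝ, 0 ≤ (b u u) * (t * t) + (2 * b f u) * t + b f f := by
      intro t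
      have h := hpsd (t • u + f)
      simp only [map_add, map_smul, LinearMap.add_apply, LinearMap.smul_apply,
        smul_eq_mul] at h
      rw [hsymm u f] at h
      nlinarith [h]
    have hd := discrim_le_zero key
    rw [discrim] at hd
    nlinarith
  have hcs1 : ⟪v, g⟫ ≤ ‖v‖ * ‖g‖ := real_inner_le_norm v g
  have hE : lam * (‖v‖ ^ 2 + b u u) ≤ ‖v‖ * ‖g‖ + b f u := by
    nlinarith [sq_nonneg ‖v‖]
  have hE0 : 0 ≤ ‖v‖ ^ 2 + b u u := add_nonneg (sq_nonneg _) (hpsd u)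
  rcases eq_or_lt_of_le hE0 with h0 | hpos
  · nlinarith [hpsd f, sq_nonneg ‖g‖]
  · have hnn : 0 ≤ ‖v‖ * ‖g‖ + b f u :=
      le_trans (mul_nonneg hlam.le hE0) hE
    have hkey : 2 * ‖v‖ * ‖g‖ * b f u ≤ ‖v‖ ^ 2 * b f f + ‖g‖ ^ 2 * b u u := by
      nlinarith [sq_nonneg (‖v‖ ^ 2 * b f f - ‖g‖ ^ 2 * b u u),
        sq_nonneg (2 * ‖v‖ * ‖g‖ * b f u), sq_nonneg (‖v‖ * ‖g‖),
        add_nonneg (mul_nonneg (sq_nonneg ‖v‖) (hpsd f))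
          (mul_nonneg (sq_nonneg ‖g‖) (hpsd u))]
    have hsq : (lam * (‖v‖ ^ 2 + b u u)) ^ 2 ≤
        (‖v‖ ^ 2 + b u u) * (‖g‖ ^ 2 + b f f) := by
      have h3 := mul_self_le_mul_self (mul_nonneg hlam.le hE0) hE
      nlinarith [h3, hkey, hcs2]
    nlinarith [mul_pos hpos hpos, hsq]
end

section
/- Let H be a real inner product space, ν > 0, Λ > 0 and T > 0. Let u : ℝ → H be twice continuously differentiable and T-periodic, and let w : ℝ → H be continuous and T-periodic, such that u''(t) + ν u'(t) + w(t) = 0 for all t ∈ ℝ. Assume the function q(t) := ⟨u(t), w(t)⟩ is differentiable with q'(t) = 2⟨u'(t), w(t)⟩ for all t ∈ ℝ, and that q(t) ≥ Λ‖u(t)‖² for all t ∈ ℝ. Then u(t) = 0 for all t ∈ ℝ. -/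
open scoped RealInnerProductSpace

/-- Uniqueness of periodic solutions of the coercive damped wave
equation.  In a real inner product space `H`, for `ν, Λ, T > 0`, if `u : ℝ → H` is
twice continuously differentiable and `T`-periodic, `w : ℝ → H` is continuous and
`T`-periodic, `u'' + ν u' + w = 0`, the function `q t := ⟪u t, w t⟫` is differentiable
with `q' = 2⟪u', w⟫`, and `q t ≥ Λ‖u t‖²` for all `t`, then `u ≡ 0`. -/
theorem stmt_11 {H : Type*} [NormedAddCommGroup H] [InnerProductSpace ℝ H]
    (ν Λ T : ℝ) (hν : 0 < ν) (hΛ : 0 < Λ) (hT : 0 < T)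
    (u w : ℝ → H) (hu : ContDiff ℝ 2 u) (huper : ∀ t, u (t + T) = u t)
    (hw : Continuous w) (hwper : ∀ t, w (t + T) = w t)
    (heq : ∀ t : ℝ, deriv (deriv u) t + ν • deriv u t + w t = 0)
    (hq : ∀ t : ℝ,
      HasDerivAt (fun r => ⟪u r, w r⟫) (2 * ⟪deriv u t, w t⟫) t)
    (hcoer : ∀ t : ℝ, Λ * ‖u t‖ ^ 2 ≤ ⟪u t, w t⟫) :
    ∀ t : ℝ, u t = 0 := by
  have hu2 : ContDiff ℝ ((1 : ℕ) + 1) u := by exact_mod_cast hu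
  rw [contDiff_succ_iff_deriv] at hu2
  obtain ⟨hudiff, -, hu1⟩ := hu2
  have hd : ∀ t, HasDerivAt (deriv u) (deriv (deriv u) t) t := fun t =>
    ((hu1.differentiable (by simp)) t).hasDerivAt
  -- energy function
  set F : ℝ → ℝ := fun t => ⟪deriv u t, deriv u t⟫ + ⟪u t, w t⟫ with hF
  have hF' : ∀ t, HasDerivAt F (-(2 * ν) * ⟪deriv u t, deriv u t⟫) t := by
    intro t
    have h1 := ((hd t).inner ℝ (hd t)).add (hq t)
    refine h1.congr_deriv ?_
    have h2 : deriv (deriv u) t = -(ν • deriv u t) - w t := by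
      have := heq t; linear_combination (norm := module) this
    rw [h2]
    simp [inner_sub_left, inner_sub_right, inner_smul_left, inner_smul_right,
      inner_neg_left, inner_neg_right, real_inner_comm (u t) (w t),
      real_inner_comm (deriv u t) (w t)]
    ring
  have hFanti : Antitone F := by
    apply antitone_of_deriv_nonpos (fun t => (hF' t).differentiableAt)
    intro t
    rw [(hF' t).deriv]
    have := real_inner_self_nonneg (x := deriv u t)
    nlinarith
  -- periodicity of F
  have hperu : Function.Periodic u T := huper
  have hdper : ∀ t, deriv u (t + T) = deriv u t := by
    intro t
    have : deriv u (t + T) = deriv (fun s => u (s + T)) t := by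
      rw [deriv_comp_add_const]
    rw [this]
    congr 1
    funext s; exact huper s
  have hFper : Function.Periodic F T := by
    intro t; simp only [hF, hdper t, huper t, hwper t]
  -- F constant
  have hFconst : ∀ t, F t = F 0 := by
    have key : ∀ s t : ℝ, s ≤ t → F s = F t := by
      intro s t hst
      obtain ⟨n, hn⟩ := exists_nat_ge ((t - s) / T)
      have hsn : t ≤ s + n * T := by
        have := (div_le_iff₀ hT).mp hn
        linarith
      have := hFanti hsn
      rw [hFper.nat_mul n s] at this
      exact le_antisymm this (hFanti hst)
    intro t
    rcases le_total t 0 with h | h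
    · exact key t 0 h
    · exact (key 0 t h).symm
  -- derivative of F is zero, hence deriv u = 0
  have hd0 : ∀ t, deriv u t = 0 := by
    intro t
    have : HasDerivAt F 0 t := by
      have : F = fun _ => F 0 := funext hFconst
      rw [this]; exact hasDerivAt_const t (F 0)
    have h0 := (hF' t).unique this
    have hpos := real_inner_self_nonneg (x := deriv u t)
    have : ⟪deriv u t, deriv u t⟫ = 0 := by nlinarith
    exact inner_self_eq_zero.mp this
  -- hence w = 0
  have hw0 : ∀ t, w t = 0 := by
    intro t
    have : deriv (deriv u) t = 0 := by
      have : deriv u = fun _ => (0 : H) := funext hd0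
      rw [this, deriv_const]
    have h3 := heq t
    rw [this, hd0 t] at h3
    simpa using h3
  intro t
  have := hcoer t
  rw [hw0 t, inner_zero_right] at this
  have : ‖u t‖ ^ 2 ≤ 0 := by nlinarith
  have : ‖u t‖ = 0 := by nlinarith [norm_nonneg (u t), sq_nonneg (‖u t‖)]
  exact norm_eq_zero.mp this
end

section
/- Let H be a real Banach space, c > 0, M ≥ 1 and T > 0. Let S : [0,∞) → B(H) be a strongly continuous one-parameter semigroup, i.e. S(0) = I, S(t + s) = S(t)S(s) for all t, s ≥ 0, and r ↦ S(r)x is continuous for every x ∈ H, satisfying ‖S(t)‖ ≤ M e^{-ct} for all t ≥ 0. Let f : ℝ → H be continuous and T-periodic. Then U(t) := ∫_{-∞}^t S(t-s)(f(s)) ds is well-defined for all t ∈ ℝ, is continuous and T-periodic, and satisfies the Duhamel identity U(t) = S(t - r)(U(r)) + ∫_r^t S(t-s)(f(s)) ds for all r ≤ t. Moreover, U is the unique bounded continuous function ℝ → H satisfying this Duhamel identity for all r ≤ t. -/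
open MeasureTheory Set

/-- Existence and uniqueness of the `T`-periodic mild (Duhamel)
solution.  For a real Banach space `H`, an exponentially decaying strongly continuous
semigroup `S` (with `S 0 = I`, `S (t+s) = S t ∘ S s` for `t, s ≥ 0`, strong continuity
on `[0,∞)`, and `‖S t‖ ≤ M e^{-ct}`), and `f : ℝ → H` continuous and `T`-periodic,
the function `U t := ∫_{-∞}^t S(t-s)(f s) ds` is well-defined, continuous,
`T`-periodic, satisfies the Duhamel identity
`U t = S (t-r) (U r) + ∫_r^t S(t-s)(f s) ds` for all `r ≤ t`, and is the unique
bounded continuous function satisfying this identity. -/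
theorem stmt_15 {H : Type*} [NormedAddCommGroup H] [NormedSpace ℝ H] [CompleteSpace H]
    (c M T : ℝ) (hc : 0 < c) (hM : 1 ≤ M) (hT : 0 < T)
    (S : ℝ → H →L[ℝ] H)
    (hS0 : S 0 = ContinuousLinearMap.id ℝ H)
    (hSsemi : ∀ t ≥ (0 : ℝ), ∀ s ≥ (0 : ℝ), S (t + s) = (S t).comp (S s))
    (hScont : ∀ x : H, ContinuousOn (fun r => S r x) (Ici 0))
    (hSbound : ∀ t ≥ (0 : ℝ), ‖S t‖ ≤ M * Real.exp (-c * t))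
    (f : ℝ → H) (hf : Continuous f) (hfper : ∀ t, f (t + T) = f t) :
    (∀ t : ℝ, IntegrableOn (fun s => S (t - s) (f s)) (Iic t)) ∧
    Continuous (fun t => ∫ s in Iic t, S (t - s) (f s)) ∧
    (∀ t : ℝ, (∫ s in Iic (t + T), S (t + T - s) (f s))
        = ∫ s in Iic t, S (t - s) (f s)) ∧
    (∀ r t : ℝ, r ≤ t →
      (∫ s in Iic t, S (t - s) (f s)) =
        S (t - r) (∫ s in Iic r, S (r - s) (f s)) + ∫ s in r..t, S (t - s) (f s)) ∧
    (∀ V : ℝ → H, Continuous V → (∃ B : ℝ, ∀ t, ‖V t‖ ≤ B) →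
      (∀ r t : ℝ, r ≤ t → V t = S (t - r) (V r) + ∫ s in r..t, S (t - s) (f s)) →
      V = fun t => ∫ s in Iic t, S (t - s) (f s)) := by
  have hMpos : (0:ℝ) < M := lt_of_lt_of_le one_pos hM
  have hSM : ∀ r ≥ (0:ℝ), ‖S r‖ ≤ M := by
    intro r hr
    refine (hSbound r hr).trans ?_
    have : Real.exp (-c * r) ≤ 1 := Real.exp_le_one_iff.mpr (by nlinarith)
    nlinarith
  -- bound on f
  obtain ⟨C, hC0, hC⟩ : ∃ C, 0 ≤ C ∧ ∀ s, ‖f s‖ ≤ C := by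
    obtain ⟨x, -, hx⟩ := isCompact_Icc.exists_isMaxOn (α := ℝ) (s := Icc 0 T)
      ⟨0, le_refl 0, hT.le⟩ hf.norm.continuousOn
    refine ⟨‖f x‖, norm_nonneg _, fun s => ?_⟩
    have hp : Function.Periodic f T := hfper
    obtain ⟨y, hy, hys⟩ := hp.exists_mem_Ico₀ hT s
    rw [hys]
    exact hx ⟨hy.1, hy.2.le⟩
  -- joint continuity of the kernel
  have hker : ∀ t : ℝ, ContinuousOn (fun s => S (t - s) (f s)) (Iic t) := by
    intro t s₀ hs₀
    have hmaps : MapsTo (fun s : ℝ => t - s) (Iic t) (Ici 0) := fun s hs => by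
      simpa using sub_nonneg.mpr (mem_Iic.mp hs)
    have h2 : ContinuousWithinAt (fun s => S (t - s) (f s₀)) (Iic t) s₀ :=
      ((hScont (f s₀)).comp ((continuous_const.sub continuous_id).continuousOn) hmaps) s₀ hs₀
    have h1 : Filter.Tendsto (fun s => S (t - s) (f s) - S (t - s) (f s₀))
        (nhdsWithin s₀ (Iic t)) (nhds 0) := by
      apply squeeze_zero_norm' (a := fun s => M * ‖f s - f s₀‖)
      · filter_upwards [self_mem_nhdsWithin] with s hs
        have heq : S (t-s) (f s) - S (t-s) (f s₀) = S (t-s) (f s - f s₀) := (map_sub _ _ _).symm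
        rw [heq]
        calc ‖S (t-s) (f s - f s₀)‖ ≤ ‖S (t-s)‖ * ‖f s - f s₀‖ := (S (t-s)).le_opNorm _
          _ ≤ M * ‖f s - f s₀‖ :=
            mul_le_mul_of_nonneg_right (hSM _ (sub_nonneg.mpr (mem_Iic.mp hs))) (norm_nonneg _)
      · have : Filter.Tendsto (fun s => f s - f s₀) (nhdsWithin s₀ (Iic t)) (nhds 0) := by
          simpa using ((hf.tendsto s₀).mono_left nhdsWithin_le_nhds).sub
            (tendsto_const_nhds (x := f s₀))
        simpa using this.norm.const_mul M
    have := h1.add h2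
    simpa [sub_add_cancel, ContinuousWithinAt] using this
  -- measure-preserving change of variables s = t - σ
  have hmp : ∀ t : ℝ, MeasurePreserving (fun x : ℝ => t - x)
      (volume.restrict (Ici 0)) (volume.restrict (Iic t)) := by
    intro t
    have h := (Measure.measurePreserving_sub_left volume t).restrict_image_emb
      (Homeomorph.subLeft t).measurableEmbedding (Ici (0:ℝ))
    rwa [image_const_sub_Ici, sub_zero] at h
  have hIciCont : ∀ t : ℝ, ContinuousOn (fun σ => S σ (f (t - σ))) (Ici 0) := by
    intro t
    have hmaps : MapsTo (fun σ : ℝ => t - σ) (Ici 0) (Iic t) := fun σ hσ => by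
      simpa using sub_le_self t hσ
    have h := (hker t).comp ((continuous_const.sub continuous_id).continuousOn) hmaps
    exact h.congr fun σ _ => by simp [Function.comp, sub_sub_cancel]
  have hptb : ∀ t σ : ℝ, 0 ≤ σ → ‖S σ (f (t - σ))‖ ≤ M * C * Real.exp (-c * σ) := by
    intro t σ hσ
    calc ‖S σ (f (t - σ))‖ ≤ ‖S σ‖ * ‖f (t - σ)‖ := (S σ).le_opNorm _
      _ ≤ (M * Real.exp (-c * σ)) * C :=
        mul_le_mul (hSbound σ hσ) (hC _) (norm_nonneg _)
          (mul_nonneg hMpos.le (Real.exp_nonneg _))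
      _ = M * C * Real.exp (-c * σ) := by ring
  have hexpInt : IntegrableOn (fun σ : ℝ => M * C * Real.exp (-c * σ)) (Ici 0) := by
    rw [integrableOn_Ici_iff_integrableOn_Ioi]
    exact (exp_neg_integrableOn_Ioi 0 hc).const_mul (M * C)
  have hIci : ∀ t : ℝ, IntegrableOn (fun σ => S σ (f (t - σ))) (Ici 0) := by
    intro t
    refine hexpInt.mono' ((hIciCont t).aestronglyMeasurable measurableSet_Ici) ?_
    filter_upwards [ae_restrict_mem measurableSet_Ici] with σ hσ
    exact hptb t σ hσ
  have hcomp : ∀ t : ℝ, ((fun s => S (t - s) (f s)) ∘ (fun x : ℝ => t - x))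
      = fun σ => S σ (f (t - σ)) := by
    intro t; funext σ; simp [Function.comp, sub_sub_cancel]
  have hIic : ∀ t : ℝ, IntegrableOn (fun s => S (t - s) (f s)) (Iic t) := by
    intro t
    have h := (hmp t).integrable_comp_emb (Homeomorph.subLeft t).measurableEmbedding
      (g := fun s => S (t - s) (f s))
    refine h.mp ?_
    show Integrable ((fun s => S (t - s) (f s)) ∘ (fun x : ℝ => t - x)) _
    rw [hcomp t]
    exact hIci t
  have hUrepr : ∀ t : ℝ, (∫ s in Iic t, S (t - s) (f s)) = ∫ σ in Ici (0:ℝ), S σ (f (t - σ)) := by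
    intro t
    have h := (Measure.measurePreserving_sub_left volume t).setIntegral_image_emb
      (Homeomorph.subLeft t).measurableEmbedding (fun s => S (t - s) (f s)) (Ici 0)
    rw [image_const_sub_Ici, sub_zero] at h
    rw [h]
    exact setIntegral_congr_fun measurableSet_Ici fun σ _ => by rw [sub_sub_cancel]
  set K := ∫ σ in Ici (0:ℝ), M * C * Real.exp (-c * σ) with hK
  have hUbound : ∀ t : ℝ, ‖∫ s in Iic t, S (t - s) (f s)‖ ≤ K := by
    intro t
    rw [hUrepr t]
    refine norm_integral_le_of_norm_le hexpInt ?_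
    filter_upwards [ae_restrict_mem measurableSet_Ici] with σ hσ
    exact hptb t σ hσ
  have hcontU : Continuous (fun t => ∫ s in Iic t, S (t - s) (f s)) := by
    have h : Continuous (fun t => ∫ σ in Ici (0:ℝ), S σ (f (t - σ))) := by
      rw [continuous_iff_continuousAt]
      intro t₀
      apply continuousAt_of_dominated (bound := fun σ => M * C * Real.exp (-c * σ))
      · exact Filter.Eventually.of_forall fun t =>
          (hIciCont t).aestronglyMeasurable measurableSet_Ici
      · exact Filter.Eventually.of_forall fun t =>
          (ae_restrict_mem measurableSet_Ici).mono fun σ hσ => hptb t σ hσ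
      · exact hexpInt
      · refine (ae_restrict_mem measurableSet_Ici).mono fun σ _ => ?_
        exact ((S σ).continuous.comp (hf.comp (continuous_id.sub continuous_const))).continuousAt
    have heq : (fun t => ∫ s in Iic t, S (t - s) (f s))
        = fun t => ∫ σ in Ici (0:ℝ), S σ (f (t - σ)) := funext hUrepr
    rw [heq]; exact h
  have hper : ∀ t : ℝ, (∫ s in Iic (t + T), S (t + T - s) (f s)) = ∫ s in Iic t, S (t - s) (f s) := by
    intro t
    rw [hUrepr, hUrepr]
    refine integral_congr_ae (Filter.Eventually.of_forall fun σ => ?_)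
    show S σ (f (t + T - σ)) = S σ (f (t - σ))
    have h : t + T - σ = (t - σ) + T := by ring
    rw [h, hfper]
  have hduh : ∀ r t : ℝ, r ≤ t → (∫ s in Iic t, S (t - s) (f s)) =
      S (t - r) (∫ s in Iic r, S (r - s) (f s)) + ∫ s in r..t, S (t - s) (f s) := by
    intro r t hrt
    have h1 : IntegrableOn (fun s => S (t - s) (f s)) (Iic r) :=
      (hIic t).mono_set (Iic_subset_Iic.mpr hrt)
    have h2 : IntegrableOn (fun s => S (t - s) (f s)) (Ioc r t) :=
      (hIic t).mono_set (Ioc_subset_Icc_self.trans Icc_subset_Iic_self)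
    have hsplit : (∫ s in Iic t, S (t - s) (f s)) =
        (∫ s in Iic r, S (t - s) (f s)) + ∫ s in Ioc r t, S (t - s) (f s) := by
      rw [← Iic_union_Ioc_eq_Iic hrt,
        setIntegral_union (Iic_disjoint_Ioc le_rfl) measurableSet_Ioc h1 h2]
    have heqq : EqOn (fun s => S (t - s) (f s)) (fun s => S (t - r) (S (r - s) (f s))) (Iic r) := by
      intro s hs
      have hts : t - s = (t - r) + (r - s) := by ring
      simp only [hts, hSsemi (t - r) (by linarith) (r - s) (sub_nonneg.mpr (mem_Iic.mp hs)),
        ContinuousLinearMap.comp_apply]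
    have hfirst : (∫ s in Iic r, S (t - s) (f s)) = S (t - r) (∫ s in Iic r, S (r - s) (f s)) := by
      rw [setIntegral_congr_fun measurableSet_Iic heqq]
      exact (S (t - r)).integral_comp_comm (hIic r)
    rw [hsplit, hfirst, intervalIntegral.integral_of_le hrt]
  refine ⟨hIic, hcontU, hper, hduh, ?_⟩
  rintro V hVc ⟨B, hB⟩ hV
  funext t
  have hD : ∀ r, r ≤ t → V t - (∫ s in Iic t, S (t - s) (f s)) =
      S (t - r) (V r - ∫ s in Iic r, S (r - s) (f s)) := by
    intro r hrt
    rw [hV r t hrt, hduh r t hrt, map_sub]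
    abel
  have key : ∀ n : ℕ, ‖V t - ∫ s in Iic t, S (t - s) (f s)‖ ≤ M * (B + K) * Real.exp (-c) ^ n := by
    intro n
    have hrt : t - (n:ℝ) ≤ t := sub_le_self t (Nat.cast_nonneg n)
    rw [hD (t - n) hrt]
    have h1 : ‖S (t - (t - (n:ℝ)))‖ ≤ M * Real.exp (-c * n) := by
      rw [sub_sub_cancel]
      exact hSbound n (Nat.cast_nonneg n)
    have h2 : ‖V (t - (n:ℝ)) - ∫ s in Iic (t - (n:ℝ)), S (t - (n:ℝ) - s) (f s)‖ ≤ B + K :=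
      (norm_sub_le _ _).trans (add_le_add (hB _) (hUbound _))
    have hBK : (0:ℝ) ≤ B + K := le_trans (norm_nonneg _) h2
    calc ‖S (t - (t - (n:ℝ))) (V (t - (n:ℝ)) - ∫ s in Iic (t - (n:ℝ)), S (t - (n:ℝ) - s) (f s))‖
        ≤ ‖S (t - (t - (n:ℝ)))‖ * ‖V (t - (n:ℝ)) - ∫ s in Iic (t - (n:ℝ)), S (t - (n:ℝ) - s) (f s)‖ :=
          (S _).le_opNorm _
      _ ≤ (M * Real.exp (-c * n)) * (B + K) :=
          mul_le_mul h1 h2 (norm_nonneg _) (mul_nonneg hMpos.le (Real.exp_nonneg _))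
      _ = M * (B + K) * Real.exp (-c) ^ n := by
          rw [show -c * (n:ℝ) = (n:ℝ) * (-c) from mul_comm _ _, Real.exp_nat_mul]; ring
  have hlim : Filter.Tendsto (fun n : ℕ => M * (B + K) * Real.exp (-c) ^ n)
      Filter.atTop (nhds 0) := by
    have h := tendsto_pow_atTop_nhds_zero_of_lt_one (Real.exp_nonneg (-c))
      (Real.exp_lt_one_iff.mpr (by linarith))
    simpa using h.const_mul (M * (B + K))
  have hz : ‖V t - ∫ s in Iic t, S (t - s) (f s)‖ ≤ 0 := ge_of_tendsto' hlim key
  have : V t - (∫ s in Iic t, S (t - s) (f s)) = 0 := by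
    simpa [norm_le_zero_iff] using hz
  exact sub_eq_zero.mp this
end
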